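/- Every 2-edge-connected undirected graph admits an orientation of its edges that makes it strongly connected (Robbins' theorem). -/

import Mathlib

open SimpleGraph

/-- Invariant: an asymmetric partial orientation of `G` inside `S` making `S`
strongly connected. -/
def RobbinsGood {V : Type*} (G : SimpleGraph V) (S : Finset V) : Prop :=
  ∃ R : V → V → Prop,
    (∀ a b, R a b → G.Adj a b ∧ a ∈ S ∧ b ∈ S) ∧
    (∀ a b, R a b → ¬ R b a) ∧
    (∀ u v, u ∈ S → v ∈ S → Relation.ReflTransGen R u v)

/-- Ear extension lemma. -/
lemma robbins_ear {V : Type*} [DecidableEq V] {G G' : SimpleGraph V}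
    (hle : ∀ a b, G'.Adj a b → G.Adj a b)
    {e : Sym2 V} (hfe : ∀ a b, G'.Adj a b → s(a, b) ≠ e)
    {t : V} :
    ∀ {p : V} (W : G'.Walk p t) (S : Finset V) (R : V → V → Prop) (w : V),
      t ∈ S → p ∉ S → w ∈ S → G.Adj w p →
      (∀ a b, R a b → G.Adj a b ∧ a ∈ S ∧ b ∈ S) →
      (∀ a b, R a b → ¬ R b a) →
      (∀ u, u ∈ S → Relation.ReflTransGen R u w) →
      (∀ q, q ∈ W.support → q ∈ S → ∀ v, v ∈ S → Relation.ReflTransGen R q v) →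
      W.support.Nodup →
      (s(w, p) = e ∨ w ∉ W.support) →
      ∃ (S' : Finset V) (R' : V → V → Prop), S ⊆ S' ∧ p ∈ S' ∧
        (∀ a b, R' a b → G.Adj a b ∧ a ∈ S' ∧ b ∈ S') ∧
        (∀ a b, R' a b → ¬ R' b a) ∧
        (∀ u v, u ∈ S' → v ∈ S' → Relation.ReflTransGen R' u v) := by
  intro p W
  induction W with
  | nil =>
    intro S R w ht hp _ _ _ _ _ _ _ _
    exact absurd ht hp
  | @cons p q t hpq W' ih =>
    intro S R w ht hp hw hwp h1 h2 h3 h4 h5 h6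
    rw [Walk.support_cons] at h4 h5 h6
    have hpW' : p ∉ W'.support := (List.nodup_cons.mp h5).1
    have hqsupp : q ∈ p :: W'.support := List.mem_cons_of_mem _ W'.start_mem_support
    have hpqG : G.Adj p q := hle _ _ hpq
    by_cases hq : q ∈ S
    · -- terminal case: close the ear
      have hqw : q ≠ w := by
        intro hqw
        rcases h6 with h6 | h6
        · exact hfe p q hpq (by rw [hqw, Sym2.eq_swap]; exact h6)
        · exact h6 (hqw ▸ hqsupp)
      refine ⟨insert p S, fun a b => R a b ∨ (a = w ∧ b = p) ∨ (a = p ∧ b = q),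
        Finset.subset_insert _ _, Finset.mem_insert_self _ _, ?_, ?_, ?_⟩
      · rintro a b (hab | ⟨ha, hb⟩ | ⟨ha, hb⟩)
        · obtain ⟨h, ha, hb⟩ := h1 a b hab
          exact ⟨h, Finset.mem_insert_of_mem ha, Finset.mem_insert_of_mem hb⟩
        · subst ha; subst hb
          exact ⟨hwp, Finset.mem_insert_of_mem hw, Finset.mem_insert_self _ _⟩
        · subst ha; subst hb
          exact ⟨hpqG, Finset.mem_insert_self _ _, Finset.mem_insert_of_mem hq⟩
      · rintro a b (hab | ⟨ha, hb⟩ | ⟨ha, hb⟩) (hba | ⟨hb', ha'⟩ | ⟨hb', ha'⟩)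
        · exact h2 a b hab hba
        · exact hp (ha' ▸ (h1 a b hab).2.1)
        · exact hp (hb' ▸ (h1 a b hab).2.2)
        · exact hp (hb ▸ (h1 b a hba).2.1)
        · exact hwp.ne (hb'.symm.trans hb)
        · exact hqw (ha'.symm.trans ha)
        · exact hp (ha ▸ (h1 b a hba).2.2)
        · exact hqw (hb.symm.trans hb')
        · exact hpqG.ne (hb'.symm.trans hb)
      · have stepwp : Relation.ReflTransGen
            (fun a b => R a b ∨ (a = w ∧ b = p) ∨ (a = p ∧ b = q)) w p :=
          Relation.ReflTransGen.single (Or.inr (Or.inl ⟨rfl, rfl⟩))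
        have steppq : Relation.ReflTransGen
            (fun a b => R a b ∨ (a = w ∧ b = p) ∨ (a = p ∧ b = q)) p q :=
          Relation.ReflTransGen.single (Or.inr (Or.inr ⟨rfl, rfl⟩))
        have hmono : ∀ {x y : V}, Relation.ReflTransGen R x y →
            Relation.ReflTransGen
              (fun a b => R a b ∨ (a = w ∧ b = p) ∨ (a = p ∧ b = q)) x y :=
          fun h => Relation.ReflTransGen.mono (fun a b hab => Or.inl hab) _ _ h
        have reachp : ∀ u ∈ S, Relation.ReflTransGen
            (fun a b => R a b ∨ (a = w ∧ b = p) ∨ (a = p ∧ b = q)) u p :=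
          fun u hu => (hmono (h3 u hu)).trans stepwp
        have fromp : ∀ v ∈ S, Relation.ReflTransGen
            (fun a b => R a b ∨ (a = w ∧ b = p) ∨ (a = p ∧ b = q)) p v :=
          fun v hv => steppq.trans (hmono (h4 q hqsupp hq v hv))
        have reachp' : ∀ u ∈ insert p S, Relation.ReflTransGen
            (fun a b => R a b ∨ (a = w ∧ b = p) ∨ (a = p ∧ b = q)) u p := by
          intro u hu
          rcases Finset.mem_insert.mp hu with h | h
          · rw [h]
          · exact reachp u h
        have fromp' : ∀ v ∈ insert p S, Relation.ReflTransGen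
            (fun a b => R a b ∨ (a = w ∧ b = p) ∨ (a = p ∧ b = q)) p v := by
          intro v hv
          rcases Finset.mem_insert.mp hv with h | h
          · rw [h]
          · exact fromp v h
        intro u v hu hv
        exact (reachp' u hu).trans (fromp' v hv)
    · -- recursive case
      have hqp : q ∉ insert p S := by
        intro h
        rcases Finset.mem_insert.mp h with h | h
        · exact hpqG.ne h.symm
        · exact hq h
      obtain ⟨S', R', hSS', hqS', h1', h2', h3'⟩ :=
        ih (insert p S) (fun a b => R a b ∨ (a = w ∧ b = p)) p
          (Finset.mem_insert_of_mem ht) hqp (Finset.mem_insert_self _ _) hpqG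
          (by
            rintro a b (hab | ⟨ha, hb⟩)
            · obtain ⟨h, ha, hb⟩ := h1 a b hab
              exact ⟨h, Finset.mem_insert_of_mem ha, Finset.mem_insert_of_mem hb⟩
            · subst ha; subst hb
              exact ⟨hwp, Finset.mem_insert_of_mem hw, Finset.mem_insert_self _ _⟩)
          (by
            rintro a b (hab | ⟨ha, hb⟩) (hba | ⟨hb', ha'⟩)
            · exact h2 a b hab hba
            · exact hp (ha' ▸ (h1 a b hab).2.1)
            · exact hp (hb ▸ (h1 b a hba).2.1)
            · exact hwp.ne (hb'.symm.trans hb))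
          (by
            intro u hu
            rcases Finset.mem_insert.mp hu with hu' | hu
            · subst hu'; exact Relation.ReflTransGen.refl
            · exact (Relation.ReflTransGen.mono (fun a b hab => Or.inl hab) _ _ (h3 u hu)).trans
                (Relation.ReflTransGen.single (Or.inr ⟨rfl, rfl⟩)))
          (by
            intro q' hq' hq'S v hv
            have hq'S' : q' ∈ S := by
              rcases Finset.mem_insert.mp hq'S with h | h
              · exact absurd (h ▸ hq') hpW'
              · exact h
            have base : Relation.ReflTransGen (fun a b => R a b ∨ (a = w ∧ b = p)) q' w :=
              Relation.ReflTransGen.mono (fun a b hab => Or.inl hab) _ _ (h3 q' hq'S')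
            rcases Finset.mem_insert.mp hv with hv' | hv
            · subst hv'
              exact base.trans (Relation.ReflTransGen.single (Or.inr ⟨rfl, rfl⟩))
            · exact Relation.ReflTransGen.mono (fun a b hab => Or.inl hab)
                _ _ (h4 q' (List.mem_cons_of_mem _ hq') hq'S' v hv))
          (List.nodup_cons.mp h5).2
          (Or.inr hpW')
      exact ⟨S', R', (Finset.subset_insert _ _).trans hSS',
        hSS' (Finset.mem_insert_self _ _), h1', h2', h3'⟩

/-- A walk from inside `S` to outside `S` yields a crossing edge. -/
lemma robbins_cross {V : Type*} {G : SimpleGraph V} (S : Finset V) :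
    ∀ {a b : V}, G.Walk a b → a ∈ S → b ∉ S →
      ∃ s x, s ∈ S ∧ x ∉ S ∧ G.Adj s x := by
  intro a b W
  induction W with
  | nil => intro h h'; exact absurd h h'
  | @cons a c b h W ih =>
    intro ha hb
    by_cases hc : c ∈ S
    · exact ih hc hb
    · exact ⟨a, c, ha, hc, h⟩

lemma robbins_grow {V : Type*} [Fintype V] [DecidableEq V] {G : SimpleGraph V}
    (hconn : G.Connected)
    (h2ec : ∀ e ∈ G.edgeSet, (G.deleteEdges {e}).Connected) :
    ∀ (n : ℕ) (S : Finset V), S.Nonempty → RobbinsGood G S →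
      Fintype.card V ≤ S.card + n → RobbinsGood G Finset.univ := by
  intro n
  induction n with
  | zero =>
    intro S _ hgood hcard
    have : S = Finset.univ :=
      Finset.eq_of_subset_of_card_le (Finset.subset_univ S)
        (by rw [Finset.card_univ]; omega)
    exact this ▸ hgood
  | succ n ih =>
    intro S hne hgood hcard
    by_cases hS : S = Finset.univ
    · exact hS ▸ hgood
    · obtain ⟨b, -, hb⟩ :=
        Finset.exists_of_ssubset ((Finset.subset_univ S).ssubset_of_ne hS)
      obtain ⟨a, ha⟩ := hne
      obtain ⟨W⟩ := hconn.preconnected a b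
      obtain ⟨s, x, hs, hx, hsx⟩ := robbins_cross S W ha hb
      have he : s(s, x) ∈ G.edgeSet := hsx
      obtain ⟨W2⟩ := (h2ec _ he).preconnected x s
      have hle : ∀ u v, (G.deleteEdges {s(s, x)}).Adj u v → G.Adj u v :=
        fun u v h => (SimpleGraph.deleteEdges_adj.mp h).1
      have hfe : ∀ u v, (G.deleteEdges {s(s, x)}).Adj u v → s(u, v) ≠ s(s, x) :=
        fun u v h => by
          have h2 := (SimpleGraph.deleteEdges_adj.mp h).2
          simpa using h2
      obtain ⟨R, h1, h2, h3⟩ := hgood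
      obtain ⟨S', R', hSS', hxS', h1', h2', h3'⟩ :=
        robbins_ear hle hfe W2.bypass S R s hs hx hs hsx h1 h2
          (fun u hu => h3 u s hu hs)
          (fun q _ hqS v hv => h3 q v hqS hv)
          (W2.bypass_isPath.support_nodup)
          (Or.inl rfl)
      have hlt : S.card < S'.card :=
        Finset.card_lt_card ((Finset.ssubset_iff_of_subset hSS').mpr ⟨x, hxS', hx⟩)
      exact ih S' ⟨x, hxS'⟩ ⟨R', h1', h2', h3'⟩ (by omega)

/-- Robbins' theorem: every 2-edge-connected undirected graph admits an
orientation of its edges making it strongly connected. -/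
theorem stmt3 {V : Type*} [Fintype V] [Nonempty V] (G : SimpleGraph V)
    (hconn : G.Connected)
    (h2ec : ∀ e ∈ G.edgeSet, (G.deleteEdges {e}).Connected) :
    ∃ D : V → V → Prop,
      (∀ a b, D a b → G.Adj a b) ∧
      (∀ a b, G.Adj a b → (D a b ↔ ¬ D b a)) ∧
      (∀ u v, Relation.ReflTransGen D u v) := by
  classical
  obtain ⟨v₀⟩ := ‹Nonempty V›
  have hstart : RobbinsGood G {v₀} :=
    ⟨fun _ _ => False, fun a b h => h.elim, fun a b h => h.elim,
      fun u v hu hv => by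
        simp only [Finset.mem_singleton] at hu hv
        subst hu; subst hv; exact Relation.ReflTransGen.refl⟩
  obtain ⟨R, h1, h2, h3⟩ :=
    robbins_grow hconn h2ec (Fintype.card V) {v₀} ⟨v₀, Finset.mem_singleton_self v₀⟩
      hstart (by rw [Finset.card_singleton]; omega)
  refine ⟨fun a b => G.Adj a b ∧ (R a b ∨ (¬ R b a ∧ WellOrderingRel a b)),
    fun a b h => h.1, ?_, ?_⟩
  · intro a b hab
    constructor
    · rintro ⟨-, hD⟩ ⟨-, hD'⟩
      rcases hD with hR | ⟨hnR, hrel⟩ <;> rcases hD' with hR' | ⟨hnR', hrel'⟩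
      · exact h2 a b hR hR'
      · exact hnR' hR
      · exact hnR hR'
      · exact absurd hrel' (asymm hrel)
    · intro hnD
      by_cases hR : R a b
      · exact ⟨hab, Or.inl hR⟩
      by_cases hR' : R b a
      · exact absurd ⟨hab.symm, Or.inl hR'⟩ hnD
      rcases trichotomous_of WellOrderingRel a b with hrel | heq | hrel
      · exact ⟨hab, Or.inr ⟨hR', hrel⟩⟩
      · exact absurd heq hab.ne
      · exact absurd ⟨hab.symm, Or.inr ⟨hR, hrel⟩⟩ hnD
  · intro u v
    exact Relation.ReflTransGen.mono (fun a b hab => ⟨(h1 a b hab).1, Or.inl hab⟩)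
      _ _ (h3 u v (Finset.mem_univ u) (Finset.mem_univ v))
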